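/- Let M be an irreducible nonnegative integer n×n matrix (n ≥ 1) whose every row sum is at least 1. If the Perron–Frobenius eigenvalue (spectral radius) of M equals 1, then M is a permutation matrix, and moreover the corresponding permutation is a single n-cycle (M is a transitive permutation matrix). -/

import Mathlib

open Polynomial Finset

/-- Sum of a multiset of complexes: absolute value bound. -/
lemma abs_multiset_sum_le (s : Multiset ℂ) :
    ‖s.sum‖ ≤ (s.map (fun z => ‖z‖)).sum := by
  induction s using Multiset.induction_on with
  | empty => simp
  | cons a s ih =>
      simp only [Multiset.sum_cons, Multiset.map_cons]
      exact le_trans (norm_add_le _ _) (by gcongr)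

/-- Membership in the spectrum of a complex matrix is equivalent to being a root of
the characteristic polynomial. -/
lemma mem_spectrum_iff_isRoot_charpoly {n : ℕ} (A : Matrix (Fin n) (Fin n) ℂ) (z : ℂ) :
    z ∈ spectrum ℂ A ↔ A.charpoly.IsRoot z := by
  have hmap : (Matrix.charmatrix A).map (Polynomial.evalRingHom z)
      = algebraMap ℂ (Matrix (Fin n) (Fin n) ℂ) z - A := by
    ext i j
    by_cases h : i = j
    · subst h
      simp [Matrix.charmatrix_apply_eq, Matrix.algebraMap_matrix_apply]
    · simp [Matrix.charmatrix_apply_ne _ _ _ h, Matrix.algebraMap_matrix_apply, h]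
  rw [spectrum.mem_iff, Matrix.isUnit_iff_isUnit_det, isUnit_iff_ne_zero, not_ne_iff,
    Polynomial.IsRoot.def, Matrix.charpoly, ← Polynomial.coe_evalRingHom, RingHom.map_det,
    RingHom.mapMatrix_apply, hmap]

/-- Entry-wise submultiplicativity for powers of a nonnegative integer matrix. -/
lemma entry_mul_le {n : ℕ} (M : Matrix (Fin n) (Fin n) ℕ) (s t : ℕ) (i k j : Fin n) :
    (M ^ s) i k * (M ^ t) k j ≤ (M ^ (s + t)) i j := by
  rw [pow_add, Matrix.mul_apply]
  exact Finset.single_le_sum (f := fun k => (M ^ s) i k * (M ^ t) k j)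
    (fun _ _ => Nat.zero_le _) (Finset.mem_univ k)

lemma two_pow_le_entry {n : ℕ} (M : Matrix (Fin n) (Fin n) ℕ) {K : ℕ} {i : Fin n}
    (hK : 2 ≤ (M ^ K) i i) : ∀ t, 2 ^ t ≤ (M ^ (K * t)) i i := by
  intro t
  induction t with
  | zero => simp [Matrix.one_apply]
  | succ t ih =>
      calc 2 ^ (t + 1) = 2 ^ t * 2 := by ring
      _ ≤ (M ^ (K * t)) i i * (M ^ K) i i := Nat.mul_le_mul ih hK
      _ ≤ (M ^ (K * t + K)) i i := entry_mul_le M _ _ i i i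
      _ = (M ^ (K * (t + 1))) i i := by ring_nf

theorem stmt_4 {n : ℕ} (hn : 1 ≤ n) (M : Matrix (Fin n) (Fin n) ℕ)
    (hirr : ∀ i j, ∃ m : ℕ, 1 ≤ m ∧ 0 < (M ^ m) i j)
    (hrow : ∀ i, 1 ≤ ∑ j, M i j)
    (hspec : ∀ z : ℂ, (Matrix.charpoly (M.map fun a : ℕ => (a : ℂ))).IsRoot z →
      ‖z‖ ≤ 1) :
    ∃ σ : Equiv.Perm (Fin n),
      (∀ i j, M i j = if σ i = j then 1 else 0) ∧
      ∀ i j : Fin n, ∃ m : ℕ, (σ ^ m) i = j := by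
  -- the complex version of `M`
  set f : Matrix (Fin n) (Fin n) ℕ →+* Matrix (Fin n) (Fin n) ℂ :=
    (Nat.castRingHom ℂ).mapMatrix with hf
  have hfM : f M = M.map (fun a : ℕ => (a : ℂ)) := rfl
  -- trace bound coming from the spectral hypothesis
  have htrace : ∀ k : ℕ, 0 < k → (M ^ k).trace ≤ n := by
    intro k hk
    have hpowmap : f (M ^ k) = (f M) ^ k := map_pow f M k
    -- all roots of charpoly of (f M)^k have modulus ≤ 1
    have hroots : ∀ r ∈ (Matrix.charpoly ((f M) ^ k)).roots, ‖r‖ ≤ 1 := by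
      intro r hr
      have hr' : ((f M) ^ k).charpoly.IsRoot r := (Polynomial.mem_roots'.mp hr).2
      have hrs : r ∈ spectrum ℂ ((f M) ^ k) :=
        (mem_spectrum_iff_isRoot_charpoly _ r).mpr hr'
      rw [spectrum.map_pow_of_pos (f M) hk] at hrs
      obtain ⟨z, hz, rfl⟩ := hrs
      have hz' : (f M).charpoly.IsRoot z := (mem_spectrum_iff_isRoot_charpoly _ z).mp hz
      have : ‖z‖ ≤ 1 := hspec z (by rwa [hfM] at hz')
      calc ‖z ^ k‖ = ‖z‖ ^ k := by rw [norm_pow]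
      _ ≤ 1 ^ k := pow_le_pow_left₀ (norm_nonneg z) this k
      _ = 1 := one_pow k
    -- trace of the complex matrix is sum of roots
    have htr : ((f M) ^ k).trace = (Matrix.charpoly ((f M) ^ k)).roots.sum :=
      Matrix.trace_eq_sum_roots_charpoly _
    have hcard : (Multiset.card (Matrix.charpoly ((f M) ^ k)).roots : ℝ) ≤ n := by
      have h1 : Multiset.card (Matrix.charpoly ((f M) ^ k)).roots
          ≤ (Matrix.charpoly ((f M) ^ k)).natDegree := Polynomial.card_roots' _
      have h2 : (Matrix.charpoly ((f M) ^ k)).natDegree = n := by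
        rw [Matrix.charpoly_natDegree_eq_dim, Fintype.card_fin]
      exact_mod_cast h2 ▸ h1
    have habs : ‖((f M) ^ k).trace‖ ≤ n := by
      rw [htr]
      calc ‖(Matrix.charpoly ((f M) ^ k)).roots.sum‖
          ≤ ((Matrix.charpoly ((f M) ^ k)).roots.map (fun z => ‖z‖)).sum :=
            abs_multiset_sum_le _
        _ ≤ Multiset.card ((Matrix.charpoly ((f M) ^ k)).roots.map (fun z => ‖z‖)) • (1 : ℝ) :=
            Multiset.sum_le_card_nsmul _ 1 (by
              intro x hx
              obtain ⟨r, hr, rfl⟩ := Multiset.mem_map.mp hx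
              exact hroots r hr)
        _ ≤ n := by
            rw [Multiset.card_map, nsmul_eq_mul, mul_one]
            exact hcard
    -- translate back to ℕ
    have htrn : ((f M) ^ k).trace = (((M ^ k).trace : ℕ) : ℂ) := by
      rw [← hpowmap, hf]
      simp only [RingHom.mapMatrix_apply, Matrix.trace, Matrix.diag, Matrix.map_apply,
        Nat.cast_sum]
      rfl
    rw [htrn, Complex.norm_natCast] at habs
    exact_mod_cast habs
  -- every row sum is exactly 1
  have hrow1 : ∀ i, ∑ j, M i j = 1 := by
    intro i
    refine le_antisymm ?_ (hrow i)
    by_contra hlt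
    push_neg at hlt
    have hsum2 : 2 ≤ ∑ j, M i j := hlt
    -- find K ≥ 1 with (M^K) i i ≥ 2
    have hKex : ∃ K, 1 ≤ K ∧ 2 ≤ (M ^ K) i i := by
      obtain ⟨j, hj⟩ : ∃ j, 1 ≤ M i j := by
        by_contra hno
        push_neg at hno
        have : ∑ j, M i j = 0 := Finset.sum_eq_zero fun j _ => Nat.lt_one_iff.mp (hno j)
        omega
      by_cases hbig : ∃ j, 2 ≤ M i j
      · obtain ⟨j0, hj0⟩ := hbig
        obtain ⟨a, _, ha⟩ := hirr j0 i
        refine ⟨1 + a, by omega, ?_⟩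
        calc 2 ≤ M i j0 * (M ^ a) j0 i :=
              le_trans (by omega) (Nat.mul_le_mul_left _ ha)
          _ = (M ^ 1) i j0 * (M ^ a) j0 i := by rw [pow_one]
          _ ≤ (M ^ (1 + a)) i i := entry_mul_le M 1 a i j0 i
      · push_neg at hbig
        obtain ⟨j', hjj', hj'⟩ : ∃ j', j' ≠ j ∧ 1 ≤ M i j' := by
          by_contra hno
          push_neg at hno
          have hz : ∀ j', j' ≠ j → M i j' = 0 := fun j' h =>
            Nat.lt_one_iff.mp (hno j' h)
          have : ∑ k, M i k = M i j := Finset.sum_eq_single j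
            (fun b _ hb => hz b hb) (fun h => absurd (Finset.mem_univ j) h)
          have := hbig j
          omega
        obtain ⟨a, _, ha⟩ := hirr j i
        obtain ⟨b, _, hb⟩ := hirr j' i
        -- loops at i
        have hA : 1 ≤ (M ^ (1 + a)) i i := by
          calc 1 ≤ (M ^ 1) i j * (M ^ a) j i := by
                rw [pow_one]; exact Nat.one_le_iff_ne_zero.mpr (Nat.mul_ne_zero (by omega) (by omega))
            _ ≤ (M ^ (1 + a)) i i := entry_mul_le M 1 a i j i
        have hB : 1 ≤ (M ^ (1 + b)) i i := by
          calc 1 ≤ (M ^ 1) i j' * (M ^ b) j' i := by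
                rw [pow_one]; exact Nat.one_le_iff_ne_zero.mpr (Nat.mul_ne_zero (by omega) (by omega))
            _ ≤ (M ^ (1 + b)) i i := entry_mul_le M 1 b i j' i
        set c := a + (1 + b) with hc
        have hcj : 1 ≤ (M ^ c) j i := by
          calc 1 ≤ (M ^ a) j i * (M ^ (1 + b)) i i :=
                Nat.one_le_iff_ne_zero.mpr (Nat.mul_ne_zero (by omega) (by omega))
            _ ≤ (M ^ c) j i := entry_mul_le M a (1 + b) j i i
        have hcj' : 1 ≤ (M ^ c) j' i := by
          have h1 : 1 ≤ (M ^ (b + (1 + a))) j' i := by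
            calc 1 ≤ (M ^ b) j' i * (M ^ (1 + a)) i i :=
                  Nat.one_le_iff_ne_zero.mpr (Nat.mul_ne_zero (by omega) (by omega))
              _ ≤ (M ^ (b + (1 + a))) j' i := entry_mul_le M b (1 + a) j' i i
          have : b + (1 + a) = c := by omega
          rwa [this] at h1
        refine ⟨1 + c, by omega, ?_⟩
        have hsplit : (M ^ (1 + c)) i i = ∑ k, M i k * (M ^ c) k i := by
          rw [pow_add, pow_one, Matrix.mul_apply]
        rw [hsplit]
        have hsub : ({j, j'} : Finset (Fin n)) ⊆ Finset.univ := Finset.subset_univ _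
        have hpair : ∑ k ∈ ({j, j'} : Finset (Fin n)), M i k * (M ^ c) k i
            ≤ ∑ k, M i k * (M ^ c) k i :=
          Finset.sum_le_sum_of_subset hsub
        have hpair2 : M i j * (M ^ c) j i + M i j' * (M ^ c) j' i
            = ∑ k ∈ ({j, j'} : Finset (Fin n)), M i k * (M ^ c) k i :=
          (Finset.sum_pair (f := fun k => M i k * (M ^ c) k i) (Ne.symm hjj')).symm
        have ht1 : 1 ≤ M i j * (M ^ c) j i :=
          Nat.one_le_iff_ne_zero.mpr (Nat.mul_ne_zero (by omega) (by omega))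
        have ht2 : 1 ≤ M i j' * (M ^ c) j' i :=
          Nat.one_le_iff_ne_zero.mpr (Nat.mul_ne_zero (by omega) (by omega))
        omega
    obtain ⟨K, hK1, hK2⟩ := hKex
    -- exponential growth of the trace: contradiction
    have hgrow : 2 ^ n ≤ (M ^ (K * n)) i i := two_pow_le_entry M hK2 n
    have htr_ge : (M ^ (K * n)) i i ≤ (M ^ (K * n)).trace :=
      Finset.single_le_sum (f := fun k => (M ^ (K * n)) k k)
        (fun _ _ => Nat.zero_le _) (Finset.mem_univ i)
    have htr_le : (M ^ (K * n)).trace ≤ n := htrace (K * n) (by positivity)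
    have : n < 2 ^ n := Nat.lt_two_pow_self
    omega
  -- extract the permutation
  have hexu : ∀ i, ∃ j, M i j = 1 ∧ ∀ j', j' ≠ j → M i j' = 0 := by
    intro i
    obtain ⟨j, hj⟩ : ∃ j, 1 ≤ M i j := by
      by_contra hno
      push_neg at hno
      have : ∑ j, M i j = 0 := Finset.sum_eq_zero fun j _ => Nat.lt_one_iff.mp (hno j)
      rw [hrow1 i] at this; omega
    have hle : M i j ≤ 1 := by
      have := Finset.single_le_sum (f := fun k => M i k)
        (fun _ _ => Nat.zero_le _) (Finset.mem_univ j)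
      rw [hrow1 i] at this; exact this
    have hMij : M i j = 1 := le_antisymm hle hj
    refine ⟨j, hMij, ?_⟩
    have hsplit : M i j + ∑ j' ∈ Finset.univ.erase j, M i j' = 1 := by
      rw [Finset.add_sum_erase _ _ (Finset.mem_univ j)]; exact hrow1 i
    have hzer : ∀ j' ∈ Finset.univ.erase j, M i j' = 0 := by
      have hsum0 : ∑ j' ∈ Finset.univ.erase j, M i j' = 0 := by omega
      exact fun j' hj' => Finset.sum_eq_zero_iff.mp hsum0 j' hj'
    intro j' hne
    exact hzer j' (Finset.mem_erase.mpr ⟨hne, Finset.mem_univ j'⟩)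
  choose g hg1 hg0 using hexu
  have hsurj : Function.Surjective g := by
    intro j
    obtain ⟨m, hm1, hm⟩ := hirr j j
    obtain ⟨m', rfl⟩ : ∃ m', m = m' + 1 := ⟨m - 1, by omega⟩
    rw [pow_succ, Matrix.mul_apply] at hm
    obtain ⟨k, -, hk⟩ := Finset.exists_ne_zero_of_sum_ne_zero (by omega : ∑ k, (M ^ m') j k * M k j ≠ 0)
    have hMkj : M k j ≠ 0 := fun h => hk (by simp [h])
    refine ⟨k, ?_⟩
    by_contra hne
    exact hMkj (hg0 k j fun h => hne (h ▸ rfl))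
  let σ : Equiv.Perm (Fin n) := Equiv.ofBijective g hsurj.bijective_of_finite
  have hσ : ∀ i, σ i = g i := fun i => rfl
  have hform : ∀ i j, M i j = if σ i = j then 1 else 0 := by
    intro i j
    rw [hσ]
    by_cases h : g i = j
    · subst h; simp [hg1 i]
    · rw [if_neg h]
      exact hg0 i j fun hj => h hj.symm
  have hpow : ∀ m i j, (M ^ m) i j = if (σ ^ m) i = j then 1 else 0 := by
    intro m
    induction m with
    | zero => intro i j; simp [Matrix.one_apply]
    | succ m ih =>
        intro i j
        rw [pow_succ', Matrix.mul_apply]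
        have : ∀ k, M i k * (M ^ m) k j = if σ i = k then (if (σ ^ m) k = j then 1 else 0) else 0 := by
          intro k
          rw [hform, ih]
          by_cases h : σ i = k <;> simp [h]
        simp only [this, Finset.sum_ite_eq, Finset.mem_univ, if_true]
        have : (σ ^ (m + 1)) i = (σ ^ m) (σ i) := by
          rw [pow_succ, Equiv.Perm.mul_apply]
        rw [this]
  refine ⟨σ, hform, ?_⟩
  intro i j
  obtain ⟨m, -, hm⟩ := hirr i j
  refine ⟨m, ?_⟩
  rw [hpow m i j] at hm
  by_contra hne
  rw [if_neg hne] at hm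
  exact absurd hm (lt_irrefl 0)
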